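/- Let X be a real normed space, C ⊆ X a convex subset, S : C → C a nonexpansive mapping, u ∈ C, m ≥ 1 an integer, and z ∈ C with z = (1/m) u + (1 − 1/m) S z. Let x ∈ C, α ∈ [0,1], and set w := α·u + (1 − α)·S x. Let M > 0 satisfy ‖S z − u‖ ≤ M and ‖S x − z‖ ≤ M, and let j₁ be a normalized duality functional at w − z and j₂ a normalized duality functional at S x − z. Then ‖w − z‖² ≤ (1 − α)·‖x − z‖² + 2α·j₁(u − z) + 2M²/m. -/

import Mathlib

set_option maxHeartbeats 1000000


/-- Recursive estimate for a Halpern step against the resolvent point: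
`‖w − z‖² ≤ (1 − α)·‖x − z‖² + 2α·j₁(u − z) + 2M²/m` where
`w = α·u + (1 − α)·S x`. -/
theorem halpern_step_resolvent_inequality
    {X : Type*} [NormedAddCommGroup X] [NormedSpace ℝ X]
    (C : Set X) (hCconv : Convex ℝ C)
    (S : X → X) (hSmaps : Set.MapsTo S C C)
    (hSne : ∀ x ∈ C, ∀ y ∈ C, ‖S x - S y‖ ≤ ‖x - y‖)
    (u : X) (hu : u ∈ C)
    (m : ℕ) (hm : 1 ≤ m)
    (z : X) (hz : z ∈ C)
    (hzfix : z = (1 / m : ℝ) • u + (1 - 1 / m : ℝ) • S z)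
    (x : X) (hx : x ∈ C)
    (α : ℝ) (hα : α ∈ Set.Icc (0 : ℝ) 1)
    (w : X) (hw : w = α • u + (1 - α) • S x)
    (M : ℝ) (hM : 0 < M)
    (hM₁ : ‖S z - u‖ ≤ M) (hM₂ : ‖S x - z‖ ≤ M)
    (j₁ : X →L[ℝ] ℝ)
    (hj₁ : j₁ (w - z) = ‖w - z‖ ^ 2) (hj₁norm : ‖j₁‖ ^ 2 = ‖w - z‖ ^ 2)
    (j₂ : X →L[ℝ] ℝ)
    (hj₂ : j₂ (S x - z) = ‖S x - z‖ ^ 2) (hj₂norm : ‖j₂‖ ^ 2 = ‖S x - z‖ ^ 2) :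
    ‖w - z‖ ^ 2 ≤
      (1 - α) * ‖x - z‖ ^ 2 + 2 * α * j₁ (u - z) + 2 * M ^ 2 / m := by
  obtain ⟨hα0, hα1⟩ := hα
  have hm' : (1 : ℝ) ≤ (m : ℝ) := by exact_mod_cast hm
  have hmpos : (0 : ℝ) < (m : ℝ) := lt_of_lt_of_le one_pos hm'
  set a := ‖w - z‖ with ha
  set b := ‖S x - z‖ with hb
  set c := ‖x - z‖ with hc
  have ha0 : 0 ≤ a := norm_nonneg _
  have hb0 : 0 ≤ b := norm_nonneg _
  have hc0 : 0 ≤ c := norm_nonneg _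
  -- operator norms
  have hj1n : ‖j₁‖ = a := (sq_eq_sq₀ (norm_nonneg _) (norm_nonneg _)).mp hj₁norm
  have hj2n : ‖j₂‖ = b := (sq_eq_sq₀ (norm_nonneg _) (norm_nonneg _)).mp hj₂norm
  -- split w - z
  have hsplit : w - z = (1 - α) • (S x - z) + α • (u - z) := by
    rw [hw]; module
  have e1 : a ^ 2 = (1 - α) * j₁ (S x - z) + α * j₁ (u - z) := by
    rw [← hj₁, hsplit]; simp
  have hb1 : j₁ (S x - z) ≤ a * b := by
    calc j₁ (S x - z) ≤ |j₁ (S x - z)| := le_abs_self _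
      _ = ‖j₁ (S x - z)‖ := (Real.norm_eq_abs _).symm
      _ ≤ ‖j₁‖ * ‖S x - z‖ := j₁.le_opNorm _
      _ = a * b := by rw [hj1n]
  have key1 : a ^ 2 ≤ (1 - α) ^ 2 * b ^ 2 + 2 * α * j₁ (u - z) := by
    have h1 : (1 - α) * j₁ (S x - z) ≤ (1 - α) * (a * b) :=
      mul_le_mul_of_nonneg_left hb1 (by linarith)
    have h2 : 2 * ((1 - α) * (a * b)) ≤ a ^ 2 + (1 - α) ^ 2 * b ^ 2 := by
      have := two_mul_le_add_sq a ((1 - α) * b)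
      nlinarith [this]
    linarith
  -- resolvent identity
  have hzz : S z - z = (1 / (m : ℝ)) • (S z - u) := by
    nth_rewrite 2 [hzfix]
    module
  have hdecomp : S x - z = (S x - S z) + (1 / (m : ℝ)) • (S z - u) := by
    rw [← hzz]; abel
  have e2 : b ^ 2 = j₂ (S x - S z) + (1 / (m : ℝ)) * j₂ (S z - u) := by
    rw [← hj₂]
    nth_rewrite 1 [hdecomp]
    simp
  have hb2 : j₂ (S x - S z) ≤ b * c := by
    calc j₂ (S x - S z) ≤ |j₂ (S x - S z)| := le_abs_self _
      _ = ‖j₂ (S x - S z)‖ := (Real.norm_eq_abs _).symm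
      _ ≤ ‖j₂‖ * ‖S x - S z‖ := j₂.le_opNorm _
      _ ≤ b * c := by
          rw [hj2n]
          exact mul_le_mul_of_nonneg_left (hSne x hx z hz) hb0
  have hb3 : j₂ (S z - u) ≤ b * M := by
    calc j₂ (S z - u) ≤ |j₂ (S z - u)| := le_abs_self _
      _ = ‖j₂ (S z - u)‖ := (Real.norm_eq_abs _).symm
      _ ≤ ‖j₂‖ * ‖S z - u‖ := j₂.le_opNorm _
      _ ≤ b * M := by rw [hj2n]; exact mul_le_mul_of_nonneg_left hM₁ hb0
  have hinv0 : (0 : ℝ) ≤ 1 / (m : ℝ) := by positivity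
  have hbM : b * M ≤ M * M := mul_le_mul_of_nonneg_right hM₂ hM.le
  have key2 : b ^ 2 ≤ c ^ 2 + 2 * M ^ 2 / (m : ℝ) := by
    have h3 : (1 / (m : ℝ)) * j₂ (S z - u) ≤ (1 / (m : ℝ)) * (M * M) :=
      mul_le_mul_of_nonneg_left (hb3.trans hbM) hinv0
    have hdiv : 2 * M ^ 2 / (m : ℝ) = 2 * ((1 / (m : ℝ)) * (M * M)) := by
      field_simp
    have h8 : 2 * b * c ≤ b ^ 2 + c ^ 2 := two_mul_le_add_sq b c
    rw [hdiv]
    linarith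
  -- combine
  have h6 : (1 - α) ^ 2 * b ^ 2 ≤ (1 - α) * b ^ 2 := by
    nlinarith [mul_nonneg (mul_nonneg hα0 (by linarith : (0:ℝ) ≤ 1 - α)) (sq_nonneg b)]
  have h5 : (1 - α) * b ^ 2 ≤ (1 - α) * (c ^ 2 + 2 * M ^ 2 / (m : ℝ)) :=
    mul_le_mul_of_nonneg_left key2 (by linarith)
  have h7 : (0 : ℝ) ≤ α * (2 * M ^ 2 / (m : ℝ)) :=
    mul_nonneg hα0 (by positivity)
  nlinarith [key1, h6, h5, h7, sq_nonneg b]
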